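/- Let (Y, 𝓖, ν) be a probability space, U : Y → Y a measure-preserving transformation, and f ∈ L^∞(ν) real-valued. Then the averages (1/H) ∑_{h=1}^{H} | ∫ f·(f∘U^{h}) dν |² converge as H → ∞, and their limit equals ∫∫ ( 𝔼(f⊗f | 𝓘²)(x,y) )² d(ν⊗ν)(x,y), where f⊗f(x,y) = f(x)f(y) and 𝓘² is the σ-algebra of (U×U)-invariant sets in Y×Y. In particular ‖⟨f⟩‖₂⁴ := lim_{H→∞} (1/H) ∑_{h=1}^{H} | ∫ f·(f∘U^{h}) dν |² is well defined and nonnegative. -/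

import Mathlib

open MeasureTheory Filter Function Topology

/-- The σ-algebra of `U`-invariant measurable sets. -/
def invariantSigma {Y : Type*} [MeasurableSpace Y] (U : Y → Y) : MeasurableSpace Y where
  MeasurableSet' s := MeasurableSet s ∧ U ⁻¹' s = s
  measurableSet_empty := ⟨MeasurableSet.empty, rfl⟩
  measurableSet_compl s hs := ⟨hs.1.compl, by rw [Set.preimage_compl, hs.2]⟩
  measurableSet_iUnion s h := ⟨MeasurableSet.iUnion fun i => (h i).1, by
    rw [Set.preimage_iUnion]
    exact Set.iUnion_congr fun i => (h i).2⟩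

lemma invariantSigma_le {Y : Type*} [MeasurableSpace Y] (U : Y → Y) :
    invariantSigma U ≤ ‹MeasurableSpace Y› := fun s hs => hs.1

lemma exists_invariant_rep {α : Type*} [MeasurableSpace α] {μ : Measure α}
    {T : α → α} (hT : MeasurePreserving T μ μ) {G : α → ℝ} (hG : Measurable G)
    (hGT : (fun x => G (T x)) =ᵐ[μ] G) :
    ∃ G' : α → ℝ, Measurable[invariantSigma T] G' ∧ G' =ᵐ[μ] G := by
  classical
  set S : Set α := {x | ∃ c, Tendsto (fun n => G (T^[n] x)) atTop (𝓝 c)} with hSdef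
  have hmeas_seq : ∀ n : ℕ, Measurable fun x => G (T^[n] x) :=
    fun n => hG.comp (hT.measurable.iterate n)
  have hS : MeasurableSet S := measurableSet_exists_tendsto hmeas_seq
  have hmap : ∀ x, Filter.map (fun n => G (T^[n] (T x))) atTop
      = Filter.map (fun n => G (T^[n] x)) atTop := by
    intro x
    have h1 : (fun n => G (T^[n] (T x))) = (fun n => G (T^[n] x)) ∘ (fun n => n + 1) := by
      funext n; simp [Function.iterate_succ_apply]
    rw [h1, ← Filter.map_map, Filter.map_add_atTop_eq_nat]
  have hSinv : ∀ x, (T x ∈ S ↔ x ∈ S) := by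
    intro x
    simp only [hSdef, Set.mem_setOf_eq, Filter.Tendsto, hmap x]
  set G' : α → ℝ := fun x => if x ∈ S then limUnder atTop (fun n => G (T^[n] x)) else 0
    with hG'def
  have hG'T : ∀ x, G' (T x) = G' x := by
    intro x
    by_cases hx : x ∈ S
    · rw [hG'def]
      simp only [hx, (hSinv x).mpr hx, if_true]
      show limUnder atTop (fun n => G (T^[n] (T x))) = _
      unfold limUnder
      rw [hmap x]
    · rw [hG'def]
      have hTx : T x ∉ S := fun h => hx ((hSinv x).mp h)
      simp only [hx, hTx, if_false]
  have hG'm0 : Measurable G' := by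
    apply measurable_of_tendsto_metrizable' atTop
      (f := fun n x => if x ∈ S then G (T^[n] x) else 0)
      (fun n => Measurable.ite hS (hmeas_seq n) measurable_const)
    rw [tendsto_pi_nhds]
    intro x
    by_cases hx : x ∈ S
    · simp only [hG'def, hx, if_true]
      exact tendsto_nhds_limUnder hx
    · simp only [hG'def, hx, if_false]
      exact tendsto_const_nhds
  have hG'm : Measurable[invariantSigma T] G' := by
    intro t ht
    exact ⟨hG'm0 ht, by ext x; simp [Set.mem_preimage, hG'T x]⟩
  refine ⟨G', hG'm, ?_⟩
  have hae : ∀ᵐ x ∂μ, ∀ n : ℕ, G (T (T^[n] x)) = G (T^[n] x) := by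
    rw [ae_all_iff]
    intro n
    exact (hT.iterate n).quasiMeasurePreserving.ae_eq_comp hGT
  filter_upwards [hae] with x hx
  have hconst : ∀ n, G (T^[n] x) = G x := by
    intro n
    induction n with
    | zero => rfl
    | succ n ih => rw [Function.iterate_succ_apply', hx n, ih]
  have hxS : x ∈ S := ⟨G x, by simp only [hconst]; exact tendsto_const_nhds⟩
  show G' x = G x
  rw [hG'def]
  simp only [hxS, if_true]
  exact Tendsto.limUnder_eq (by simp only [hconst]; exact tendsto_const_nhds)

lemma comp_ae_eq_self_of_invariant_meas {α : Type*} [MeasurableSpace α] {μ : Measure α}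
    {T : α → α} (hT : MeasurePreserving T μ μ) {g : α → ℝ}
    (hg : AEStronglyMeasurable[invariantSigma T] g μ) :
    (fun x => g (T x)) =ᵐ[μ] g := by
  obtain ⟨g', hg'm, hgg'⟩ := hg
  have hg'inv : ∀ x, g' (T x) = g' x := by
    intro x
    have hs : MeasurableSet[invariantSigma T] (g' ⁻¹' {g' x}) :=
      hg'm.measurable (measurableSet_singleton _)
    have hTs : T ⁻¹' (g' ⁻¹' {g' x}) = g' ⁻¹' {g' x} := hs.2
    have hx : x ∈ T ⁻¹' (g' ⁻¹' {g' x}) := by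
      rw [hTs]; exact rfl
    exact hx
  calc (fun x => g (T x)) =ᵐ[μ] (fun x => g' (T x)) :=
        hT.quasiMeasurePreserving.ae_eq_comp hgg'
    _ = g' := funext hg'inv
    _ =ᵐ[μ] g := hgg'.symm


set_option maxHeartbeats 2000000 in
set_option synthInstance.maxHeartbeats 1000000 in
/-- for a measure-preserving `U` on a probability space and bounded measurable
real `f`, the averages `(1/H) ∑_{h=1}^H |∫ f·(f∘U^h) dν|²` converge, with limit
`∫∫ (𝔼(f⊗f | 𝓘²))² d(ν⊗ν)`, where `𝓘²` is the σ-algebra of `U×U`-invariant sets.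
In particular `‖⟨f⟩‖₂⁴` is well defined and nonnegative. -/
theorem tendsto_avg_sq_correlations_eq_integral_condexp_sq
    {Y : Type*} [MeasurableSpace Y] (ν : Measure Y) [IsProbabilityMeasure ν]
    (U : Y → Y) (hU : MeasurePreserving U ν ν)
    (f : Y → ℝ) (hfm : Measurable f) (hfb : ∃ M : ℝ, ∀ y, |f y| ≤ M) :
    Tendsto (fun H : ℕ => (1 / (H : ℝ)) * ∑ h ∈ Finset.Icc 1 H,
        |∫ y, f y * f (U^[h] y) ∂ν| ^ 2) atTop
      (nhds (∫ p, (MeasureTheory.condExp (invariantSigma (Prod.map U U)) (ν.prod ν)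
          (fun q : Y × Y => f q.1 * f q.2) p) ^ 2 ∂(ν.prod ν))) := by

  classical
  obtain ⟨M, hM⟩ := hfb
  set μ : Measure (Y × Y) := ν.prod ν with hμdef
  have hT : MeasurePreserving (Prod.map U U) μ μ := hU.prod hU
  set T : Y × Y → Y × Y := Prod.map U U with hTdef
  set Ffun : Y × Y → ℝ := fun q => f q.1 * f q.2 with hFdef
  have hFm : Measurable Ffun := (hfm.comp measurable_fst).mul (hfm.comp measurable_snd)
  have hFb : ∀ q, ‖Ffun q‖ ≤ M * M := by
    intro q
    rw [Real.norm_eq_abs, abs_mul]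
    exact mul_le_mul (hM q.1) (hM q.2) (abs_nonneg _) ((abs_nonneg _).trans (hM q.1))
  have hF2 : MemLp Ffun 2 μ :=
    (memLp_top_of_bound hFm.aestronglyMeasurable _ (Filter.Eventually.of_forall hFb)).mono_exponent le_top
  set F : Lp ℝ 2 μ := hF2.toLp Ffun with hFdef2
  have hFcoe : ⇑F =ᵐ[μ] Ffun := hF2.coeFn_toLp
  set K : Lp ℝ 2 μ →L[ℝ] Lp ℝ 2 μ :=
    (Lp.compMeasurePreservingₗᵢ ℝ T hT).toContinuousLinearMap with hKdef
  have hKapp : ∀ g : Lp ℝ 2 μ, ⇑(K g) =ᵐ[μ] ⇑g ∘ T :=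
    fun g => Lp.coeFn_compMeasurePreserving g hT
  have hKnorm : ‖K‖ ≤ 1 := LinearIsometry.norm_toContinuousLinearMap_le _
  -- iterates
  have hKiter : ∀ k : ℕ, ⇑((⇑K)^[k] F) =ᵐ[μ] fun q => Ffun (T^[k] q) := by
    intro k
    induction k with
    | zero => exact hFcoe
    | succ k ih =>
      rw [Function.iterate_succ_apply']
      refine (hKapp _).trans ?_
      have h1 : (⇑((⇑K)^[k] F)) ∘ T =ᵐ[μ] (fun q => Ffun (T^[k] q)) ∘ T :=
        hT.quasiMeasurePreserving.ae_eq_comp ih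
      refine h1.trans ?_
      refine Filter.EventuallyEq.of_eq (funext fun q => ?_)
      simp [Function.comp, Function.iterate_succ_apply]
  -- correlations as inner products
  have hinner : ∀ h : ℕ,
      (inner ℝ F ((⇑K)^[h] F) : ℝ) = |∫ y, f y * f (U^[h] y) ∂ν| ^ 2 := by
    intro h
    rw [MeasureTheory.L2.inner_def]
    have h1 : ∫ q, (inner ℝ (F q) (((⇑K)^[h] F) q) : ℝ) ∂μ
        = ∫ q, Ffun q * Ffun (T^[h] q) ∂μ := by
      refine integral_congr_ae ?_
      filter_upwards [hFcoe, hKiter h] with q h1 h2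
      rw [h1, h2, RCLike.inner_apply, conj_trivial, mul_comm]
    rw [h1]
    have h2 : ∀ q : Y × Y, Ffun q * Ffun (T^[h] q)
        = (f q.1 * f (U^[h] q.1)) * (f q.2 * f (U^[h] q.2)) := by
      intro q
      rw [hTdef, Prod.map_iterate]
      simp only [hFdef, Prod.map_fst, Prod.map_snd]
      ring
    simp_rw [h2]
    rw [hμdef, integral_prod_mul (fun x => f x * f (U^[h] x)) (fun y => f y * f (U^[h] y))]
    rw [sq_abs, sq]
  -- conditional expectation in L2
  set c : Lp ℝ 2 μ := ↑(condExpL2 ℝ ℝ (invariantSigma_le T) F) with hcdef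
  have hc_meas : AEStronglyMeasurable[invariantSigma T] ⇑c μ :=
    aestronglyMeasurable_condExpL2 _ F
  have hcfix : K c = c := by
    refine Lp.ext ?_
    exact (hKapp c).trans (comp_ae_eq_self_of_invariant_meas hT hc_meas)
  -- the projection onto the fixed space
  set L : Lp ℝ 2 μ :=
    ↑((LinearMap.eqLocus (K : Lp ℝ 2 μ →ₗ[ℝ] Lp ℝ 2 μ) ((1 : Lp ℝ 2 μ →L[ℝ] Lp ℝ 2 μ) : Lp ℝ 2 μ →ₗ[ℝ] Lp ℝ 2 μ)).orthogonalProjectionOnto F) with hLdef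
  have hKL : K L = L :=
    ((LinearMap.eqLocus (K : Lp ℝ 2 μ →ₗ[ℝ] Lp ℝ 2 μ) ((1 : Lp ℝ 2 μ →L[ℝ] Lp ℝ 2 μ) : Lp ℝ 2 μ →ₗ[ℝ] Lp ℝ 2 μ)).orthogonalProjectionOnto F).2
  have hlim : Tendsto (fun H => birkhoffAverage ℝ (⇑K) _root_.id H F) atTop (𝓝 L) :=
    ContinuousLinearMap.tendsto_birkhoffAverage_orthogonalProjection (𝕜 := ℝ) K hKnorm F
  -- L is a.e. invariant-measurable
  have hLcomp : (⇑L) ∘ T =ᵐ[μ] ⇑L := by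
    have h1 := hKapp L
    rw [hKL] at h1
    exact h1.symm
  have hL_meas : AEStronglyMeasurable[invariantSigma T] (⇑L) μ := by
    have hG0m : Measurable ((Lp.aestronglyMeasurable L).mk ⇑L) :=
      (Lp.aestronglyMeasurable L).stronglyMeasurable_mk.measurable
    have hG0e : ⇑L =ᵐ[μ] (Lp.aestronglyMeasurable L).mk ⇑L :=
      (Lp.aestronglyMeasurable L).ae_eq_mk
    have hG0T : (fun x => (Lp.aestronglyMeasurable L).mk (⇑L) (T x))
        =ᵐ[μ] (Lp.aestronglyMeasurable L).mk ⇑L := by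
      have h1 : ((Lp.aestronglyMeasurable L).mk ⇑L) ∘ T =ᵐ[μ] (⇑L) ∘ T :=
        hT.quasiMeasurePreserving.ae_eq_comp hG0e.symm
      exact (h1.trans hLcomp).trans hG0e
    obtain ⟨G', hG'm, hG'e⟩ := exists_invariant_rep hT hG0m hG0T
    exact ⟨G', hG'm.stronglyMeasurable, hG0e.trans hG'e.symm⟩
  -- inner product juggling
  have h2 : (inner ℝ (F - L) c : ℝ) = 0 :=
    Submodule.starProjection_inner_eq_zero F c (LinearMap.mem_eqLocus.mpr hcfix)
  rw [inner_sub_left] at h2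
  have hinnerFL : (inner ℝ F L : ℝ) = inner ℝ c c := by
    calc (inner ℝ F L : ℝ)
        = inner ℝ c L := (inner_condExpL2_eq_inner_fun (invariantSigma_le T) F L hL_meas).symm
      _ = inner ℝ L c := real_inner_comm _ _
      _ = inner ℝ F c := by linarith
      _ = inner ℝ c c := (inner_condExpL2_eq_inner_fun (invariantSigma_le T) F c hc_meas).symm
  -- sequence identity
  have hseq : ∀ H : ℕ, (1 / (H : ℝ)) * ∑ h ∈ Finset.Icc 1 H, |∫ y, f y * f (U^[h] y) ∂ν| ^ 2
      = inner ℝ F (K (birkhoffAverage ℝ (⇑K) _root_.id H F)) := by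
    intro H
    have h1 : ∑ h ∈ Finset.Icc 1 H, |∫ y, f y * f (U^[h] y) ∂ν| ^ 2
        = ∑ k ∈ Finset.range H, (inner ℝ F ((⇑K)^[k + 1] F) : ℝ) := by
      rw [← Finset.Ico_add_one_right_eq_Icc, Finset.sum_Ico_eq_sum_range]
      refine Finset.sum_congr rfl fun k _ => ?_
      rw [← hinner (1 + k), add_comm 1 k]
    rw [h1, birkhoffAverage, birkhoffSum, ContinuousLinearMap.map_smul, real_inner_smul_right,
      _root_.map_sum, inner_sum, one_div]
    congr 1
    refine Finset.sum_congr rfl fun k _ => ?_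
    congr 1
    rw [Function.iterate_succ_apply']
    rfl
  -- convergence
  have hKcont : Tendsto (fun H : ℕ => (inner ℝ F (K (birkhoffAverage ℝ (⇑K) _root_.id H F)) : ℝ))
      atTop (𝓝 (inner ℝ F (K L))) :=
    Tendsto.inner tendsto_const_nhds ((K.continuous.tendsto L).comp hlim)
  rw [hKL, hinnerFL] at hKcont
  -- identify the limit with the integral of the squared conditional expectation
  have hcc : (inner ℝ c c : ℝ) = ∫ p, (condExp (invariantSigma T) μ Ffun p) ^ 2 ∂μ := by
    have hce : ⇑c =ᵐ[μ] condExp (invariantSigma T) μ Ffun := by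
      refine ae_eq_condExp_of_forall_setIntegral_eq (invariantSigma_le T)
        (hF2.integrable one_le_two)
        (fun s _ _ => (integrable_condExpL2_of_isFiniteMeasure (invariantSigma_le T)).integrableOn)
        (fun s hs hμs => ?_) hc_meas
      rw [integral_condExpL2_eq (invariantSigma_le T) F hs hμs.ne]
      exact setIntegral_congr_ae (invariantSigma_le T s hs) (hFcoe.mono fun x hx _ => hx)
    rw [L2.inner_def]
    refine integral_congr_ae ?_
    filter_upwards [hce] with p hp
    rw [RCLike.inner_apply, conj_trivial, hp, sq]
  rw [← hcc]
  exact Tendsto.congr (fun H => (hseq H).symm) hKcont
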